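/- Let q be an even prime power, m ≥ 1, and let Q(x) = Σ_{j=1}^r x_{2j-1}x_{2j} (rank 2r, type 0) be a quadratic form on F_q^m with 2r ≤ m. As (b_1,...,b_m) ranges over F_q^m and f(x) = Q(x) + Σ b_j x_j, the number of zeros N(f) equals: q^{m-1} for exactly q^m - q^{2r} choices; q^{m-1} + (q-1)q^{m-r-1} for exactly q^{2r-1} + (q-1)q^{r-1} choices; and q^{m-1} - q^{m-r-1} for exactly (q-1)(q^{2r-1} - q^{r-1}) choices. -/

import Mathlib

section Helpers

variable {F : Type*} [Field F] [Fintype F]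

/-- Auxiliary equiv: subtype of a product whose condition only involves the first factor. -/
def subFstEquiv {α β : Type*} (P : α → Prop) : {p : α × β // P p.1} ≃ {a // P a} × β where
  toFun p := (⟨p.1.1, p.2⟩, p.1.2)
  invFun q := ⟨(q.1.1, q.2), q.1.2⟩
  left_inv _ := rfl
  right_inv _ := rfl

/-- Auxiliary equiv: subtype of a product whose condition only involves the second factor. -/
def subSndEquiv {α β : Type*} (P : β → Prop) : {p : α × β // P p.2} ≃ α × {b // P b} where
  toFun p := (p.1.1, ⟨p.1.2, p.2⟩)
  invFun q := ⟨(q.1, q.2.1), q.2.2⟩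
  left_inv _ := rfl
  right_inv _ := rfl

omit [Fintype F] in
/-- Completing the square for a sum of hyperbolic planes plus a linear form. -/
def shift_equiv_aux (r : ℕ) (s t : Fin r → F) :
    {w : (Fin r → F) × (Fin r → F) //
        ∑ j, w.1 j * w.2 j + (∑ j, s j * w.1 j + ∑ j, t j * w.2 j) = 0}
      ≃ {w : (Fin r → F) × (Fin r → F) // ∑ j, w.1 j * w.2 j = ∑ j, s j * t j} where
  toFun w := ⟨(w.1.1 + t, w.1.2 + s), by
    have key : ∑ j, (w.1.1 + t) j * (w.1.2 + s) j
        = (∑ j, w.1.1 j * w.1.2 j + (∑ j, s j * w.1.1 j + ∑ j, t j * w.1.2 j))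
          + ∑ j, s j * t j := by
      simp only [Pi.add_apply, ← Finset.sum_add_distrib]
      exact Finset.sum_congr rfl fun j _ => by ring
    rw [key, w.2, zero_add]⟩
  invFun w := ⟨(w.1.1 - t, w.1.2 - s), by
    have key : ∑ j, (w.1.1 - t) j * (w.1.2 - s) j
          + (∑ j, s j * (w.1.1 - t) j + ∑ j, t j * (w.1.2 - s) j)
        = ∑ j, w.1.1 j * w.1.2 j - ∑ j, s j * t j := by
      simp only [Pi.sub_apply, ← Finset.sum_add_distrib, ← Finset.sum_sub_distrib]
      exact Finset.sum_congr rfl fun j _ => by ring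
    rw [key, w.2, sub_self]⟩
  left_inv w := by
    apply Subtype.ext
    simp
  right_inv w := by
    apply Subtype.ext
    simp

/-- The number of zeros of a function that is the sum of a function not depending on the
`i0`-th coordinate and a nonzero multiple of the `i0`-th coordinate. -/
lemma card_linear_fiber {n : ℕ} (g : (Fin n → F) → F) (i0 : Fin n) (c : F) (hc : c ≠ 0)
    (hg : ∀ x y : Fin n → F, (∀ j, j ≠ i0 → x j = y j) → g x = g y) :
    Nat.card {x : Fin n → F // g x + c * x i0 = 0} = Fintype.card F ^ (n - 1) := by
  classical
  have E : {x : Fin n → F // g x + c * x i0 = 0} ≃ ({j : Fin n // j ≠ i0} → F) := by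
    refine
      { toFun := fun x j => x.1 j.1
        invFun := fun z => ⟨fun j => if h : j = i0 then
            -(g (fun j => if h : j = i0 then 0 else z ⟨j, h⟩) / c) else z ⟨j, h⟩, ?_⟩
        left_inv := ?_
        right_inv := ?_ }
    · set x0 : Fin n → F := fun j => if h : j = i0 then 0 else z ⟨j, h⟩ with hx0
      have hgeq : g (fun j => if h : j = i0 then -(g x0 / c) else z ⟨j, h⟩) = g x0 := by
        apply hg
        intro j hj
        simp [hj, hx0]
      rw [hgeq]
      simp only [dif_pos rfl]
      rw [dif_pos trivial]
      field_simp
      ring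
    · rintro ⟨x, hx⟩
      ext j
      dsimp only
      by_cases h : j = i0
      · subst h
        rw [dif_pos rfl]
        have hgeq : g (fun k => if h : k = j then 0 else x k) = g x := by
          apply hg; intro k hk; simp [hk]
        rw [hgeq]
        field_simp
        linear_combination -hx
      · rw [dif_neg h]
    · intro z
      funext j
      dsimp only
      rw [dif_neg j.2]
  rw [Nat.card_congr E, Nat.card_eq_fintype_card, Fintype.card_fun,
    Fintype.card_subtype_compl, Fintype.card_subtype_eq, Fintype.card_fin]

/-- The number of zeros of an inhomogeneous linear equation with some nonzero coefficient. -/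
lemma card_dot_fiber {n : ℕ} (a : Fin n → F) (i : Fin n) (hi : a i ≠ 0) (c : F) :
    Nat.card {y : Fin n → F // ∑ j, a j * y j = c} = Fintype.card F ^ (n - 1) := by
  classical
  have key := card_linear_fiber (F := F)
    (fun y => (∑ j ∈ Finset.univ.erase i, a j * y j) - c) i (a i) hi
    (fun x y h => by
      have hs : ∑ j ∈ Finset.univ.erase i, a j * x j
          = ∑ j ∈ Finset.univ.erase i, a j * y j :=
        Finset.sum_congr rfl fun j hj => by rw [h j (Finset.ne_of_mem_erase hj)]
      simp only [hs])
  rw [← key]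
  apply Nat.card_congr
  apply Equiv.subtypeEquiv (Equiv.refl _)
  intro y
  simp only [Equiv.refl_apply]
  rw [← Finset.add_sum_erase _ _ (Finset.mem_univ i)]
  constructor <;> intro h <;> linear_combination h

open scoped Classical in
lemma card_hyperbolic_aux (r : ℕ) (c : F) :
    Nat.card {p : (Fin r → F) × (Fin r → F) // ∑ j, p.1 j * p.2 j = c} =
      (if c = 0 then Fintype.card F ^ r else 0)
        + (Fintype.card F ^ r - 1) * Fintype.card F ^ (r - 1) := by
  classical
  set q := Fintype.card F with hq
  have step : {p : (Fin r → F) × (Fin r → F) // ∑ j, p.1 j * p.2 j = c}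
      ≃ Σ a : Fin r → F, {b : Fin r → F // ∑ j, a j * b j = c} :=
    Equiv.subtypeProdEquivSigmaSubtype
      (fun (a b : Fin r → F) => ∑ j, a j * b j = c)
  rw [Nat.card_congr step, Nat.card_eq_fintype_card, Fintype.card_sigma]
  have : ∀ a : Fin r → F, Fintype.card {b : Fin r → F // ∑ j, a j * b j = c}
      = Nat.card {b : Fin r → F // ∑ j, a j * b j = c} :=
    fun a => (Nat.card_eq_fintype_card).symm
  rw [Finset.sum_congr rfl fun a _ => this a,
    ← Finset.add_sum_erase _ _ (Finset.mem_univ (0 : Fin r → F))]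
  have hz : Nat.card {b : Fin r → F // ∑ j, (0 : Fin r → F) j * b j = c}
      = if c = 0 then q ^ r else 0 := by
    split_ifs with hc
    · subst hc
      rw [Nat.card_congr (Equiv.subtypeUnivEquiv (by simp)), Nat.card_eq_fintype_card,
        Fintype.card_fun, Fintype.card_fin]
    · haveI : IsEmpty {b : Fin r → F // ∑ j, (0 : Fin r → F) j * b j = c} := by
        constructor
        rintro ⟨b, hb⟩
        simp at hb
        exact hc hb.symm
      exact Nat.card_of_isEmpty
  have hnz : ∀ a ∈ Finset.univ.erase (0 : Fin r → F),
      Nat.card {b : Fin r → F // ∑ j, a j * b j = c} = q ^ (r - 1) := by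
    intro a ha
    obtain ⟨i, hi⟩ := Function.ne_iff.1 (Finset.ne_of_mem_erase ha)
    exact card_dot_fiber a i hi c
  rw [Finset.sum_congr rfl hnz, Finset.sum_const, Finset.card_erase_of_mem (Finset.mem_univ _),
    Finset.card_univ, Fintype.card_fun, Fintype.card_fin, hz, smul_eq_mul]

open scoped Classical in
/-- The number of zeros of `∑ x_j y_j = c` on `F^r × F^r`. -/
lemma card_hyperbolic (r : ℕ) (hr : 1 ≤ r) (c : F) :
    Nat.card {p : (Fin r → F) × (Fin r → F) // ∑ j, p.1 j * p.2 j = c} =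
      if c = 0 then
        Fintype.card F ^ (2 * r - 1) + (Fintype.card F - 1) * Fintype.card F ^ (r - 1)
      else Fintype.card F ^ (2 * r - 1) - Fintype.card F ^ (r - 1) := by
  classical
  rw [card_hyperbolic_aux]
  set q := Fintype.card F with hq
  have hq2 : 2 ≤ q := Fintype.one_lt_card
  have h1 : 1 ≤ q ^ r := Nat.one_le_pow _ _ (by omega)
  have e1 : (q ^ r - 1) * q ^ (r - 1) = q ^ (2 * r - 1) - q ^ (r - 1) := by
    rw [Nat.sub_mul, one_mul, ← pow_add]
    congr 2
    omega
  have e2 : (q - 1) * q ^ (r - 1) = q ^ r - q ^ (r - 1) := by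
    rw [Nat.sub_mul, one_mul, ← pow_succ']
    congr 2
    omega
  have hle1 : q ^ (r - 1) ≤ q ^ r := Nat.pow_le_pow_right (by omega) (by omega)
  have hle2 : q ^ (r - 1) ≤ q ^ (2 * r - 1) := Nat.pow_le_pow_right (by omega) (by omega)
  split_ifs with hc
  · rw [e1, e2]; omega
  · rw [e1]; omega

/-- Splitting functions on the index sum type into a triple. -/
def splitEquiv (r k : ℕ) : (((Fin r ⊕ Fin r) ⊕ Fin k) → F)
    ≃ (((Fin r → F) × (Fin r → F)) × (Fin k → F)) where
  toFun y := ((fun j => y (.inl (.inl j)), fun j => y (.inl (.inr j))), fun j => y (.inr j))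
  invFun p := Sum.elim (Sum.elim p.1.1 p.1.2) p.2
  left_inv y := funext fun s => by rcases s with (j | j) | j <;> rfl
  right_inv := show Function.RightInverse _ _ from fun p => rfl

/-- Reindexing functions on `Fin m` along an index equivalence. -/
def funEquiv {m r k : ℕ} (e : ((Fin r ⊕ Fin r) ⊕ Fin k) ≃ Fin m) :
    (Fin m → F) ≃ (((Fin r ⊕ Fin r) ⊕ Fin k) → F) where
  toFun x := x ∘ e
  invFun y := y ∘ e.symm
  left_inv x := by funext i; simp
  right_inv y := by funext s; simp

omit [Fintype F] in
lemma sum_transport {m r k : ℕ} (e : ((Fin r ⊕ Fin r) ⊕ Fin k) ≃ Fin m)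
    (f : Fin m → F) :
    ∑ i, f i = (∑ j : Fin r, f (e (.inl (.inl j))) + ∑ j : Fin r, f (e (.inl (.inr j))))
      + ∑ j : Fin k, f (e (.inr j)) := by
  rw [← Equiv.sum_comp e f, Fintype.sum_sum_type, Fintype.sum_sum_type]

/-- Case where all "tail" coefficients of the linear part vanish: the zero count reduces to
the zero count of a hyperbolic equation on `F^r × F^r`. -/
lemma count_gamma_zero {m r k : ℕ} (e : ((Fin r ⊕ Fin r) ⊕ Fin k) ≃ Fin m)
    (Q : (Fin m → F) → F)
    (hQe : ∀ x : Fin m → F, Q x = ∑ j : Fin r, x (e (.inl (.inl j))) * x (e (.inl (.inr j))))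
    (b : Fin m → F) (hb : ∀ j : Fin k, b (e (.inr j)) = 0) :
    Nat.card {x : Fin m → F // Q x + ∑ i, b i * x i = 0}
      = Nat.card {w : (Fin r → F) × (Fin r → F) //
          ∑ j, w.1 j * w.2 j = ∑ j : Fin r, b (e (.inl (.inl j))) * b (e (.inl (.inr j)))}
        * Fintype.card F ^ k := by
  classical
  set s : Fin r → F := fun j => b (e (.inl (.inl j))) with hs
  set t : Fin r → F := fun j => b (e (.inl (.inr j))) with ht
  have step1 : {x : Fin m → F // Q x + ∑ i, b i * x i = 0}
      ≃ {p : ((Fin r → F) × (Fin r → F)) × (Fin k → F) //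
          ∑ j, p.1.1 j * p.1.2 j + (∑ j, s j * p.1.1 j + ∑ j, t j * p.1.2 j) = 0} := by
    refine Equiv.subtypeEquiv ((funEquiv e).trans (splitEquiv r k)) fun x => ?_
    have hsum := sum_transport e (fun i => b i * x i)
    have hzero : ∑ j : Fin k, b (e (.inr j)) * x (e (.inr j)) = 0 := by
      apply Finset.sum_eq_zero
      intro j _
      rw [hb j, zero_mul]
    simp only [funEquiv, splitEquiv, Equiv.trans_apply, Equiv.coe_fn_mk,
      Function.comp_apply, hs, ht]
    rw [hQe x, hsum, hzero, add_zero]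
  have step2 : {p : ((Fin r → F) × (Fin r → F)) × (Fin k → F) //
          ∑ j, p.1.1 j * p.1.2 j + (∑ j, s j * p.1.1 j + ∑ j, t j * p.1.2 j) = 0}
      ≃ {w : (Fin r → F) × (Fin r → F) //
          ∑ j, w.1 j * w.2 j + (∑ j, s j * w.1 j + ∑ j, t j * w.2 j) = 0} × (Fin k → F) :=
    subFstEquiv (fun w : (Fin r → F) × (Fin r → F) =>
      ∑ j, w.1 j * w.2 j + (∑ j, s j * w.1 j + ∑ j, t j * w.2 j) = 0)
  rw [Nat.card_congr ((step1.trans step2).trans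
    (Equiv.prodCongr (shift_equiv_aux r s t) (Equiv.refl _))), Nat.card_prod,
    Nat.card_eq_fintype_card (α := Fin k → F), Fintype.card_fun, Fintype.card_fin]

/-- Case where some coefficient of the linear part multiplies a variable not occurring in the
quadratic part: the count is `q^(m-1)`. -/
lemma count_gamma_ne {m : ℕ} (Q : (Fin m → F) → F) (b : Fin m → F) (i0 : Fin m)
    (hb : b i0 ≠ 0)
    (hQind : ∀ x y : Fin m → F, (∀ j, j ≠ i0 → x j = y j) → Q x = Q y) :
    Nat.card {x : Fin m → F // Q x + ∑ i, b i * x i = 0} = Fintype.card F ^ (m - 1) := by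
  classical
  have key := card_linear_fiber
    (fun x => Q x + ∑ i ∈ Finset.univ.erase i0, b i * x i) i0 (b i0) hb
    (fun x y h => by
      have h1 : Q x = Q y := hQind x y h
      have h2 : ∑ i ∈ Finset.univ.erase i0, b i * x i
          = ∑ i ∈ Finset.univ.erase i0, b i * y i :=
        Finset.sum_congr rfl fun j hj => by rw [h j (Finset.ne_of_mem_erase hj)]
      simp only [h1, h2])
  rw [← key]
  apply Nat.card_congr
  apply Equiv.subtypeEquiv (Equiv.refl _)
  intro x
  simp only [Equiv.refl_apply]
  rw [← Finset.add_sum_erase _ _ (Finset.mem_univ i0)]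
  constructor <;> intro h <;> linear_combination h

/-- Count of `b` whose "tail" part is nonzero. -/
lemma count_tail_ne {m r k : ℕ} (e : ((Fin r ⊕ Fin r) ⊕ Fin k) ≃ Fin m) :
    Nat.card {b : Fin m → F // ¬ ∀ j : Fin k, b (e (.inr j)) = 0}
      = Fintype.card F ^ (2 * r) * (Fintype.card F ^ k - 1) := by
  classical
  have step : {b : Fin m → F // ¬ ∀ j : Fin k, b (e (.inr j)) = 0}
      ≃ ((Fin r → F) × (Fin r → F)) × {t : Fin k → F // ¬ t = 0} := by
    refine Equiv.trans
      (Equiv.subtypeEquiv ((funEquiv e).trans (splitEquiv r k)) fun b => ?_)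
      (subSndEquiv (fun t : Fin k → F => ¬ t = 0))
    simp only [funEquiv, splitEquiv, Equiv.trans_apply, Equiv.coe_fn_mk,
      Function.comp_apply, funext_iff]
    simp
  rw [Nat.card_congr step, Nat.card_prod, Nat.card_eq_fintype_card, Nat.card_eq_fintype_card,
    Fintype.card_subtype_compl, Fintype.card_subtype_eq, Fintype.card_prod]
  simp only [Fintype.card_fun, Fintype.card_fin]
  rw [← pow_add]
  congr 2
  omega

/-- Count of `b` whose tail part vanishes and whose "head" part satisfies `P`. -/
lemma count_tail_zero {m r k : ℕ} (e : ((Fin r ⊕ Fin r) ⊕ Fin k) ≃ Fin m)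
    (P : (Fin r → F) × (Fin r → F) → Prop) :
    Nat.card {b : Fin m → F // (∀ j : Fin k, b (e (.inr j)) = 0)
        ∧ P (fun j => b (e (.inl (.inl j))), fun j => b (e (.inl (.inr j))))}
      = Nat.card {w : (Fin r → F) × (Fin r → F) // P w} := by
  classical
  have step : {b : Fin m → F // (∀ j : Fin k, b (e (.inr j)) = 0)
        ∧ P (fun j => b (e (.inl (.inl j))), fun j => b (e (.inl (.inr j))))}
      ≃ {w : (Fin r → F) × (Fin r → F) // P w} × {t : Fin k → F // t = 0} := by
    refine Equiv.trans
      (Equiv.subtypeEquiv ((funEquiv e).trans (splitEquiv r k)) fun b => ?_)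
      (Equiv.subtypeProdEquivProd)
    simp only [funEquiv, splitEquiv, Equiv.trans_apply, Equiv.coe_fn_mk,
      Function.comp_apply, funext_iff]
    rw [and_comm]
    simp
  rw [Nat.card_congr step, Nat.card_prod, Nat.card_eq_fintype_card (α := {t : Fin k → F // t = 0}),
    Fintype.card_subtype_eq, mul_one]

lemma arith_compl (q r : ℕ) (hq : 2 ≤ q) (hr : 1 ≤ r) :
    q ^ (2 * r) - (q ^ (2 * r - 1) + (q - 1) * q ^ (r - 1))
      = (q - 1) * (q ^ (2 * r - 1) - q ^ (r - 1)) := by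
  have E1 : q ^ (2 * r) = q * q * q ^ (r - 1) * q ^ (r - 1) := by
    rw [show 2 * r = 1 + 1 + ((r - 1) + (r - 1)) by omega]; ring
  have E2 : q ^ (2 * r - 1) = q * q ^ (r - 1) * q ^ (r - 1) := by
    rw [show 2 * r - 1 = 1 + ((r - 1) + (r - 1)) by omega]; ring
  set M := q ^ (r - 1) with hM
  have hM1 : 1 ≤ M := Nat.one_le_pow _ _ (by omega)
  rw [E1, E2]
  have h2 : M ≤ q * M * M := by
    calc M = 1 * 1 * M := by ring
    _ ≤ q * M * M := Nat.mul_le_mul (Nat.mul_le_mul (by omega) hM1) le_rfl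
  have h3 : q * M * M + (q - 1) * M ≤ q * q * M * M := by
    have h1 : (q - 1) * M ≤ q * M := Nat.mul_le_mul_right M (Nat.sub_le q 1)
    have h2' : q * M ≤ q * M * M := Nat.le_mul_of_pos_right _ hM1
    have h3' : q * M * M + q * M * M ≤ q * q * M * M := by
      calc q * M * M + q * M * M = 2 * (M * M) * q := by ring
      _ ≤ q * (M * M) * q := Nat.mul_le_mul (Nat.mul_le_mul hq le_rfl) le_rfl
      _ = q * q * M * M := by ring
    omega
  zify [h2, h3, (by omega : 1 ≤ q)]
  ring

end Helpers




/-- let `q` be even and `Q(x) = Σ_{j=1}^r x_{2j-1}x_{2j}` (rank `2r`,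
type `0`) on `F_q^m` with `2r ≤ m`. As `b` ranges over `F_q^m` and
`f(x) = Q(x) + Σ b_j x_j`, the number of zeros `N(f)` equals `q^(m-1)` for exactly
`q^m - q^(2r)` choices of `b`, `q^(m-1) + (q-1)q^(m-r-1)` for exactly
`q^(2r-1) + (q-1)q^(r-1)` choices, and `q^(m-1) - q^(m-r-1)` for exactly
`(q-1)(q^(2r-1) - q^(r-1))` choices. -/
theorem zero_counts_even_char_type_zero_plus_linear
    (F : Type*) [Field F] [Fintype F] (heven : Even (Fintype.card F))
    (m r : ℕ) (hr : 1 ≤ r) (hrm : 2 * r ≤ m)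
    (Q : (Fin m → F) → F)
    (hQ : ∀ x, Q x = ∑ j : Fin r,
      x ⟨2 * j.1, by have := j.2; omega⟩ * x ⟨2 * j.1 + 1, by have := j.2; omega⟩) :
    Nat.card {b : Fin m → F //
        Nat.card {x : Fin m → F // Q x + ∑ j, b j * x j = 0}
          = Fintype.card F ^ (m - 1)}
      = Fintype.card F ^ m - Fintype.card F ^ (2 * r) ∧
    Nat.card {b : Fin m → F //
        Nat.card {x : Fin m → F // Q x + ∑ j, b j * x j = 0}
          = Fintype.card F ^ (m - 1)
            + (Fintype.card F - 1) * Fintype.card F ^ (m - r - 1)}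
      = Fintype.card F ^ (2 * r - 1) + (Fintype.card F - 1) * Fintype.card F ^ (r - 1) ∧
    Nat.card {b : Fin m → F //
        Nat.card {x : Fin m → F // Q x + ∑ j, b j * x j = 0}
          = Fintype.card F ^ (m - 1) - Fintype.card F ^ (m - r - 1)}
      = (Fintype.card F - 1)
          * (Fintype.card F ^ (2 * r - 1) - Fintype.card F ^ (r - 1)) := by
  classical
  have hq2 : 2 ≤ Fintype.card F := Fintype.one_lt_card
  -- the index equivalence
  let φ : (Fin r ⊕ Fin r) ⊕ Fin (m - 2 * r) → Fin m :=
    Sum.elim (Sum.elim (fun j => ⟨2 * j.1, by have := j.2; omega⟩)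
      (fun j => ⟨2 * j.1 + 1, by have := j.2; omega⟩))
      (fun j => ⟨2 * r + j.1, by have := j.2; omega⟩)
  have hinj : Function.Injective φ := by
    intro a b h
    rcases a with (j | j) | j <;> rcases b with (l | l) | l <;>
      have hj := j.2 <;> have hl := l.2 <;>
      simp only [φ, Sum.elim_inl, Sum.elim_inr, Fin.mk.injEq] at h <;>
      first
        | exact absurd h (by omega)
        | rw [show j = l from Fin.ext (by omega)]
  have hcard : Fintype.card ((Fin r ⊕ Fin r) ⊕ Fin (m - 2 * r)) = Fintype.card (Fin m) := by
    simp only [Fintype.card_sum, Fintype.card_fin]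
    omega
  let e : ((Fin r ⊕ Fin r) ⊕ Fin (m - 2 * r)) ≃ Fin m :=
    Equiv.ofBijective φ ((Fintype.bijective_iff_injective_and_card φ).2 ⟨hinj, hcard⟩)
  have hQe : ∀ x : Fin m → F,
      Q x = ∑ j : Fin r, x (e (.inl (.inl j))) * x (e (.inl (.inr j))) := fun x => hQ x
  -- arithmetic preliminaries
  have h1 : 2 * r - 1 + (m - 2 * r) = m - 1 := by omega
  have h2 : r - 1 + (m - 2 * r) = m - r - 1 := by omega
  have hA2 : (Fintype.card F ^ (2 * r - 1) + (Fintype.card F - 1) * Fintype.card F ^ (r - 1))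
        * Fintype.card F ^ (m - 2 * r)
      = Fintype.card F ^ (m - 1) + (Fintype.card F - 1) * Fintype.card F ^ (m - r - 1) := by
    rw [add_mul, mul_assoc, ← pow_add, ← pow_add, h1, h2]
  have hA3 : (Fintype.card F ^ (2 * r - 1) - Fintype.card F ^ (r - 1))
        * Fintype.card F ^ (m - 2 * r)
      = Fintype.card F ^ (m - 1) - Fintype.card F ^ (m - r - 1) := by
    rw [Nat.sub_mul, ← pow_add, ← pow_add, h1, h2]
  have hA1 : Fintype.card F ^ (2 * r) * (Fintype.card F ^ (m - 2 * r) - 1)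
      = Fintype.card F ^ m - Fintype.card F ^ (2 * r) := by
    rw [Nat.mul_sub, ← pow_add, mul_one, show 2 * r + (m - 2 * r) = m by omega]
  have hp1 : 0 < Fintype.card F ^ (m - 1) := pow_pos (by omega) _
  have hp2 : 0 < Fintype.card F ^ (m - r - 1) := pow_pos (by omega) _
  have hp3 : 0 < (Fintype.card F - 1) * Fintype.card F ^ (m - r - 1) :=
    Nat.mul_pos (by omega) hp2
  have hlt31 : Fintype.card F ^ (m - 1) - Fintype.card F ^ (m - r - 1)
      < Fintype.card F ^ (m - 1) := Nat.sub_lt hp1 hp2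
  have hlt12 : Fintype.card F ^ (m - 1)
      < Fintype.card F ^ (m - 1) + (Fintype.card F - 1) * Fintype.card F ^ (m - r - 1) :=
    Nat.lt_add_of_pos_right hp3
  -- the trichotomy for the inner count
  have key : ∀ b : Fin m → F,
      Nat.card {x : Fin m → F // Q x + ∑ j, b j * x j = 0} =
        if ∀ j : Fin (m - 2 * r), b (e (.inr j)) = 0 then
          (if (∑ j : Fin r, b (e (.inl (.inl j))) * b (e (.inl (.inr j)))) = 0 then
            Fintype.card F ^ (m - 1) + (Fintype.card F - 1) * Fintype.card F ^ (m - r - 1)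
          else Fintype.card F ^ (m - 1) - Fintype.card F ^ (m - r - 1))
        else Fintype.card F ^ (m - 1) := by
    intro b
    split_ifs with hb hc
    · rw [count_gamma_zero e Q hQe b hb, card_hyperbolic r hr _, if_pos hc, hA2]
    · rw [count_gamma_zero e Q hQe b hb, card_hyperbolic r hr _, if_neg hc, hA3]
    · push_neg at hb
      obtain ⟨j0, hj0⟩ := hb
      apply count_gamma_ne Q b (e (.inr j0)) hj0
      intro x y hxy
      rw [hQ x, hQ y]
      refine Finset.sum_congr rfl fun j _ => ?_
      have hv : (e (Sum.inr j0) : Fin m).1 = 2 * r + j0.1 := rfl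
      have hx1 : x ⟨2 * j.1, by have := j.2; omega⟩ = y ⟨2 * j.1, by have := j.2; omega⟩ := by
        apply hxy
        intro hcontra
        have hvv := congrArg Fin.val hcontra
        rw [hv] at hvv
        simp only at hvv
        have := j.2
        omega
      have hx2 : x ⟨2 * j.1 + 1, by have := j.2; omega⟩
          = y ⟨2 * j.1 + 1, by have := j.2; omega⟩ := by
        apply hxy
        intro hcontra
        have hvv := congrArg Fin.val hcontra
        rw [hv] at hvv
        simp only at hvv
        have := j.2
        omega
      rw [hx1, hx2]
  have iff1 : ∀ b : Fin m → F,
      (Nat.card {x : Fin m → F // Q x + ∑ j, b j * x j = 0} = Fintype.card F ^ (m - 1))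
        ↔ ¬ ∀ j : Fin (m - 2 * r), b (e (.inr j)) = 0 := by
    intro b
    rw [key b]
    split_ifs with hb hc
    · exact iff_of_false (by omega) (fun h => h hb)
    · exact iff_of_false (by omega) (fun h => h hb)
    · exact iff_of_true rfl hb
  have iff2 : ∀ b : Fin m → F,
      (Nat.card {x : Fin m → F // Q x + ∑ j, b j * x j = 0}
          = Fintype.card F ^ (m - 1) + (Fintype.card F - 1) * Fintype.card F ^ (m - r - 1))
        ↔ ((∀ j : Fin (m - 2 * r), b (e (.inr j)) = 0)
            ∧ (∑ j : Fin r, b (e (.inl (.inl j))) * b (e (.inl (.inr j)))) = 0) := by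
    intro b
    rw [key b]
    split_ifs with hb hc
    · exact iff_of_true rfl ⟨hb, hc⟩
    · exact iff_of_false (by omega) (fun h => hc h.2)
    · exact iff_of_false (by omega) (fun h => hb h.1)
  have iff3 : ∀ b : Fin m → F,
      (Nat.card {x : Fin m → F // Q x + ∑ j, b j * x j = 0}
          = Fintype.card F ^ (m - 1) - Fintype.card F ^ (m - r - 1))
        ↔ ((∀ j : Fin (m - 2 * r), b (e (.inr j)) = 0)
            ∧ ¬ (∑ j : Fin r, b (e (.inl (.inl j))) * b (e (.inl (.inr j)))) = 0) := by
    intro b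
    rw [key b]
    split_ifs with hb hc
    · exact iff_of_false (by omega) (fun h => h.2 hc)
    · exact iff_of_true rfl ⟨hb, hc⟩
    · exact iff_of_false (by omega) (fun h => hb h.1)
  refine ⟨?_, ?_, ?_⟩
  · rw [Nat.card_congr (Equiv.subtypeEquiv
      (q := fun b : Fin m → F => ¬ ∀ j : Fin (m - 2 * r), b (e (.inr j)) = 0)
      (Equiv.refl (Fin m → F)) iff1)]
    rw [count_tail_ne e, hA1]
  · rw [Nat.card_congr (Equiv.subtypeEquiv
      (q := fun b : Fin m → F => (∀ j : Fin (m - 2 * r), b (e (.inr j)) = 0)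
        ∧ (∑ j : Fin r, b (e (.inl (.inl j))) * b (e (.inl (.inr j)))) = 0)
      (Equiv.refl (Fin m → F)) iff2)]
    refine Eq.trans (count_tail_zero e
      (fun w : (Fin r → F) × (Fin r → F) => ∑ j, w.1 j * w.2 j = 0)) ?_
    rw [card_hyperbolic r hr 0, if_pos rfl]
  · rw [Nat.card_congr (Equiv.subtypeEquiv
      (q := fun b : Fin m → F => (∀ j : Fin (m - 2 * r), b (e (.inr j)) = 0)
        ∧ ¬ (∑ j : Fin r, b (e (.inl (.inl j))) * b (e (.inl (.inr j)))) = 0)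
      (Equiv.refl (Fin m → F)) iff3)]
    refine Eq.trans (count_tail_zero e
      (fun w : (Fin r → F) × (Fin r → F) => ¬ ∑ j, w.1 j * w.2 j = 0)) ?_
    have hfull : Fintype.card ((Fin r → F) × (Fin r → F)) = Fintype.card F ^ (2 * r) := by
      rw [Fintype.card_prod, Fintype.card_fun, Fintype.card_fin, ← pow_add]
      congr 1
      omega
    have h0 : Fintype.card {w : (Fin r → F) × (Fin r → F) // ∑ j, w.1 j * w.2 j = 0}
        = Fintype.card F ^ (2 * r - 1) + (Fintype.card F - 1) * Fintype.card F ^ (r - 1) := by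
      rw [← Nat.card_eq_fintype_card, card_hyperbolic r hr 0, if_pos rfl]
    rw [Nat.card_eq_fintype_card, Fintype.card_subtype_compl, hfull, h0,
      arith_compl (Fintype.card F) r hq2 hr]
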